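/- For any two direction-consistent orientations O and Ô, any function h : ℂ^{V×d} → ℂ^{V×k}, and any matrix X ∈ ℂ^{E×d}, one has (B_inv)ᴴ · h(B_equ(Ô) · (Δ_{O,Ô} · X)) = (B_inv)ᴴ · h(B_equ(O) · X); that is, the equivariant-to-invariant fusion mapping X ↦ (B_inv)ᴴ h(B_equ(O) X) is jointly orientation-invariant. -/
import Mathlib


open Matrix

/-- `O` assigns to each edge either its endpoint pair `(s e, t e)` or the reversed pair. -/
def IsOrientation {V E : Type*} (s t : E → V) (O : E → V × V) : Prop :=
  ∀ e, O e = (s e, t e) ∨ O e = (t e, s e)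

/-- A direction-consistent orientation: an orientation which agrees with the direction
`(s e, t e)` on every directed edge. -/
def DirConsistent {V E : Type*} (s t : E → V) (dir : E → Bool) (O : E → V × V) : Prop :=
  IsOrientation s t O ∧ ∀ e, dir e = true → O e = (s e, t e)

/-- The magnetic equivariant boundary operator. -/
noncomputable def Bequ {V E : Type*} [DecidableEq V] (q : ℝ) (s t : E → V) (dir : E → Bool)
    (O : E → V × V) : Matrix V E ℂ :=
  Matrix.of fun v e =>
    if dir e then
      if v = s e then -Complex.exp (Complex.I * (Real.pi * q : ℂ))
      else if v = t e then Complex.exp (-(Complex.I * (Real.pi * q : ℂ)))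
      else 0
    else
      if v = (O e).1 then -1
      else if v = (O e).2 then 1
      else 0

/-- The magnetic invariant boundary operator. -/
noncomputable def Binv {V E : Type*} [DecidableEq V] (q : ℝ) (s t : E → V) (dir : E → Bool) :
    Matrix V E ℂ :=
  Matrix.of fun v e =>
    if dir e then
      if v = s e then Complex.exp (Complex.I * (Real.pi * q : ℂ))
      else if v = t e then Complex.exp (-(Complex.I * (Real.pi * q : ℂ)))
      else 0
    else
      if v = s e ∨ v = t e then 1 else 0

/-- The orientation-change matrix `Δ_{O,Ô}`. -/
noncomputable def Delta {V E : Type*} [DecidableEq V] [DecidableEq E] (O Ohat : E → V × V) :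
    Matrix E E ℂ :=
  Matrix.diagonal fun e => if O e = Ohat e then 1 else -1

/-- The equivariant-to-invariant fusion mapping `X ↦ (B_inv)ᴴ h(B_equ(O) X)`
is jointly orientation-invariant. -/
theorem fusion_equ_to_inv_jointly_orientation_invariant
    {V E d k : Type*} [Fintype V] [Fintype E] [DecidableEq V] [DecidableEq E]
    [Fintype d] [Fintype k]
    (q : ℝ) (s t : E → V) (hst : ∀ e, s e ≠ t e) (dir : E → Bool)
    (O Ohat : E → V × V)
    (hO : DirConsistent s t dir O) (hOhat : DirConsistent s t dir Ohat)
    (h : Matrix V d ℂ → Matrix V k ℂ) (X : Matrix E d ℂ) :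
    (Binv q s t dir)ᴴ * h (Bequ q s t dir Ohat * (Delta O Ohat * X)) =
      (Binv q s t dir)ᴴ * h (Bequ q s t dir O * X) := by
  have key : Bequ q s t dir Ohat * Delta O Ohat = Bequ q s t dir O := by
    ext v e
    rw [Delta, Matrix.mul_diagonal]
    by_cases hdir : dir e = true
    · have h1 := hO.2 e hdir
      have h2 := hOhat.2 e hdir
      simp [Bequ, hdir, h1, h2]
    · by_cases heq : O e = Ohat e
      · simp [Bequ, heq]
      · -- O e and Ohat e are opposite orientations
        have hswap : Ohat e = ((O e).2, (O e).1) := by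
          rcases hO.1 e with h1 | h1 <;> rcases hOhat.1 e with h2 | h2 <;>
            simp_all
        have hne : (O e).1 ≠ (O e).2 := by
          rcases hO.1 e with h1 | h1 <;> simp [h1, hst e, (hst e).symm]
        simp only [Bequ, Matrix.of_apply, heq, if_false, hswap, hdir]
        by_cases hv1 : v = (O e).1 <;> by_cases hv2 : v = (O e).2 <;>
          simp_all
  rw [← Matrix.mul_assoc, key]
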